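/- arXiv:math/0605605 — 3 statements merged into one kernel-verified Lean document; each statement's English description precedes it below -/
import Mathlib

section
/- Let m be a positive integer, and let V be an open convex subset of ℂ^m such that V ∩ ℝ^m is nonempty. Let h : V → ℝ be a twice continuously differentiable function satisfying: (i) h is pluriharmonic on V, i.e. ∂²h/∂z_j∂z̄_k = 0 on V for all j,k ∈ {1,…,m}; (ii) h(x) = 0 for every x ∈ V ∩ ℝ^m; (iii) h(z̄₁,…,z̄_m) = h(z₁,…,z_m) whenever both (z₁,…,z_m) and its componentwise complex conjugate (z̄₁,…,z̄_m) lie in V. Then h is identically zero on V. -/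
open Topology

noncomputable def clmOfReal {E : Type*} [NormedAddCommGroup E] [NormedSpace ℂ E]
    (T : E →L[ℝ] ℂ) (hT : ∀ v, T (Complex.I • v) = Complex.I * T v) : E →L[ℂ] ℂ :=
  { toLinearMap :=
    { toFun := T
      map_add' := fun x y => T.map_add x y
      map_smul' := by
        intro c v
        simp only [RingHom.id_apply, smul_eq_mul]
        have hv : c • v = c.re • v + c.im • (Complex.I • v) := by
          calc c • v = ((c.re : ℂ) + (c.im : ℂ) * Complex.I) • v := by rw [Complex.re_add_im]
            _ = (c.re : ℂ) • v + ((c.im : ℂ) * Complex.I) • v := add_smul _ _ _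
            _ = c.re • v + c.im • (Complex.I • v) := by
                rw [Complex.coe_smul, mul_smul, Complex.coe_smul]
        rw [hv, map_add, map_smul, map_smul, hT, Complex.real_smul, Complex.real_smul]
        conv_rhs => rw [← Complex.re_add_im c]
        ring }
    cont := T.cont }

lemma clmOfReal_restrict {E : Type*} [NormedAddCommGroup E] [NormedSpace ℂ E]
    (T : E →L[ℝ] ℂ) (hT) : (clmOfReal T hT).restrictScalars ℝ = T := by
  ext v; rfl

lemma vdecomp (m : ℕ) (v : Fin m → ℂ) :
    ∑ j : Fin m, ((v j).re • (Pi.single j (1:ℂ) : Fin m → ℂ)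
      + (v j).im • (Pi.single j Complex.I : Fin m → ℂ)) = v := by
  funext i
  rw [Finset.sum_apply]
  rw [Finset.sum_eq_single i]
  · simp [Pi.single_apply, Complex.real_smul, Complex.re_add_im]
  · intro j _ hj
    simp [Pi.single_apply, Ne.symm hj]
  · simp

lemma I_smul_single_one (m : ℕ) (j : Fin m) :
    Complex.I • (Pi.single j (1:ℂ) : Fin m → ℂ) = Pi.single j Complex.I := by
  funext i
  by_cases hij : i = j
  · subst hij; simp
  · simp [Pi.single_eq_of_ne hij]

lemma I_smul_single_I (m : ℕ) (j : Fin m) :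
    Complex.I • (Pi.single j Complex.I : Fin m → ℂ) = -(Pi.single j (1:ℂ) : Fin m → ℂ) := by
  funext i
  by_cases hij : i = j
  · subst hij; simp [Complex.I_mul_I]
  · simp [Pi.single_eq_of_ne hij]

lemma clm_I_smul {m : ℕ} (T : (Fin m → ℂ) →L[ℝ] ℂ)
    (h1 : ∀ j : Fin m, T (Pi.single j Complex.I) = Complex.I * T (Pi.single j 1)) :
    ∀ v, T (Complex.I • v) = Complex.I * T v := by
  intro v
  have hIv : Complex.I • v = ∑ j : Fin m, ((v j).re • (Pi.single j Complex.I : Fin m → ℂ)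
      - (v j).im • (Pi.single j (1:ℂ) : Fin m → ℂ)) := by
    conv_lhs => rw [← vdecomp m v]
    rw [Finset.smul_sum]
    refine Finset.sum_congr rfl fun j _ => ?_
    rw [smul_add, smul_comm, smul_comm Complex.I, I_smul_single_one, I_smul_single_I, smul_neg]
    abel
  rw [hIv, map_sum]
  conv_rhs => rw [← vdecomp m v, map_sum, Finset.mul_sum]
  refine Finset.sum_congr rfl fun j _ => ?_
  rw [map_sub, map_smul, map_smul, map_add, map_smul, map_smul, h1 j]
  simp only [smul_eq_mul, Complex.real_smul]
  linear_combination (-(((v j).im : ℂ)) * T (Pi.single j 1)) * Complex.I_mul_I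

theorem holo_zero_of_real_zero {m : ℕ} {V : Set (Fin m → ℂ)} (hVopen : IsOpen V)
    (hVconv : Convex ℝ V) {p : Fin m → ℂ} (hp : p ∈ V) (hpre : ∀ j, (p j).im = 0)
    {G : (Fin m → ℂ) → ℂ} (hG : DifferentiableOn ℂ G V)
    (hG0 : ∀ z ∈ V, (∀ j, (z j).im = 0) → G z = 0) :
    ∀ z ∈ V, G z = 0 := by
  obtain ⟨r, hr, hball⟩ := Metric.isOpen_iff.1 hVopen p hp
  have stepA : ∀ k : ℕ, ∀ z ∈ Metric.ball p r,
      (∀ j : Fin m, k ≤ (j : ℕ) → (z j).im = 0) → G z = 0 := by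
    intro k
    induction k with
    | zero => exact fun z hz hzk => hG0 z (hball hz) fun j => hzk j (Nat.zero_le _)
    | succ k ih =>
      intro z hz hzk
      by_cases hkm : k < m
      · set κ : Fin m := ⟨k, hkm⟩ with hκ
        set c : ℂ → (Fin m → ℂ) := fun t => Function.update z κ t with hc
        have hmaps : ∀ t ∈ Metric.ball (p κ) r, c t ∈ Metric.ball p r := by
          intro t ht
          rw [Metric.mem_ball] at ht ⊢
          rw [dist_pi_lt_iff hr]
          intro j
          by_cases hj : j = κ
          · subst hj; simpa [hc] using ht
          · simp only [hc, Function.update_of_ne hj]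
            exact lt_of_le_of_lt (dist_le_pi_dist z p j) (Metric.mem_ball.1 hz)
        have hcdiff : Differentiable ℂ c := by
          have hceq : c = fun t => z + (t - z κ) • (Pi.single κ (1:ℂ) : Fin m → ℂ) := by
            funext t j
            by_cases hj : j = κ
            · subst hj; simp [hc]
            · simp [hc, Function.update_of_ne hj, Pi.single_apply, hj]
          rw [hceq]
          exact (differentiable_const _).add
            ((differentiable_id.sub_const _).smul_const _)
        have hφa : AnalyticOnNhd ℂ (G ∘ c) (Metric.ball (p κ) r) :=
          (hG.comp hcdiff.differentiableOn fun t ht => hball (hmaps t ht)).analyticOnNhd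
            Metric.isOpen_ball
        have hpκ : p κ ∈ Metric.ball (p κ) r := Metric.mem_ball_self hr
        have hclos : p κ ∈ closure ({t : ℂ | (G ∘ c) t = 0} \ {p κ}) := by
          rw [Metric.mem_closure_iff]
          intro ε hε
          set δ : ℝ := min (ε / 2) (r / 2) with hδ
          have hδpos : 0 < δ := lt_min (by linarith) (by linarith)
          refine ⟨p κ + Complex.ofReal δ, ⟨?_, ?_⟩, ?_⟩
          · show G (c (p κ + Complex.ofReal δ)) = 0
            have htball : p κ + Complex.ofReal δ ∈ Metric.ball (p κ) r := by
              rw [Metric.mem_ball, dist_eq_norm, add_sub_cancel_left]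
              calc ‖(δ : ℂ)‖ = |δ| := Complex.norm_real δ
                _ = δ := abs_of_pos hδpos
                _ ≤ r / 2 := min_le_right _ _
                _ < r := by linarith
            refine ih _ (hmaps _ htball) ?_
            intro j hj
            by_cases hjκ : j = κ
            · subst hjκ
              simp [hc, Complex.add_im, hpre κ]
            · have : (j : ℕ) ≠ k := fun hh => hjκ (Fin.ext hh)
              simp only [hc, Function.update_of_ne hjκ]
              exact hzk j (Nat.lt_of_le_of_ne hj (Ne.symm this))
          · simp only [Set.mem_singleton_iff]
            intro hcontra
            have : Complex.ofReal δ = 0 := by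
              have := congrArg (fun x => x - p κ) hcontra
              simpa using this
            rw [Complex.ofReal_eq_zero] at this
            linarith
          · rw [dist_comm, dist_eq_norm, add_sub_cancel_left]
            calc ‖(δ : ℂ)‖ = |δ| := Complex.norm_real δ
              _ = δ := abs_of_pos hδpos
              _ ≤ ε / 2 := min_le_left _ _
              _ < ε := by linarith
        have heq := hφa.eqOn_zero_of_preconnected_of_mem_closure
          (convex_ball (p κ) r).isPreconnected hpκ hclos
        have hzκ : z κ ∈ Metric.ball (p κ) r :=
          lt_of_le_of_lt (dist_le_pi_dist z p κ) (Metric.mem_ball.1 hz)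
        have := heq hzκ
        simpa [hc, Function.update_eq_self] using this
      · exact ih z hz fun j hj =>
          absurd (lt_of_lt_of_le j.isLt (not_lt.1 hkm)) (not_lt.2 hj)
  -- Step B
  intro z hz
  set w : Fin m → ℂ := z - p with hw
  set Ω : Set ℂ := {t : ℂ | p + t • w ∈ V} with hΩ
  have hcont : Continuous fun t : ℂ => p + t • w :=
    continuous_const.add (continuous_id.smul continuous_const)
  have hΩopen : IsOpen Ω := hVopen.preimage hcont
  have hΩconv : Convex ℝ Ω := by
    intro t1 h1 t2 h2 a b ha hb hab
    show p + (a • t1 + b • t2) • w ∈ V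
    have hmem := hVconv h1 h2 ha hb hab
    have hp1 : a • (p : Fin m → ℂ) + b • p = p := by rw [← add_smul, hab, one_smul]
    have : a • (p + t1 • w) + b • (p + t2 • w) = p + (a • t1 + b • t2) • w := by
      rw [smul_add, smul_add, ← smul_assoc, ← smul_assoc, add_smul]
      rw [show ∀ x1 x2 y1 y2 : Fin m → ℂ, x1 + y1 + (x2 + y2) = (x1 + x2) + (y1 + y2) from
        fun _ _ _ _ => by abel, hp1]
    rwa [this] at hmem
  have h0 : (0:ℂ) ∈ Ω := by simp [hΩ, hp]
  have h1 : (1:ℂ) ∈ Ω := by simp [hΩ, hw, hz]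
  have hφa : AnalyticOnNhd ℂ (fun t => G (p + t • w)) Ω := by
    refine DifferentiableOn.analyticOnNhd ?_ hΩopen
    exact hG.comp ((differentiable_const _).add
      (differentiable_id.smul_const _)).differentiableOn fun t ht => ht
  have hev : (fun t => G (p + t • w)) =ᶠ[𝓝 (0:ℂ)] 0 := by
    have hδpos : 0 < r / (‖w‖ + 1) := by positivity
    refine Filter.eventuallyEq_of_mem (Metric.ball_mem_nhds (0:ℂ) hδpos) ?_
    intro t ht
    rw [mem_ball_zero_iff] at ht
    have hmem : p + t • w ∈ Metric.ball p r := by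
      rw [Metric.mem_ball, dist_eq_norm, add_sub_cancel_left, norm_smul]
      calc ‖t‖ * ‖w‖ ≤ ‖t‖ * (‖w‖ + 1) := by
            exact mul_le_mul_of_nonneg_left (by linarith) (norm_nonneg t)
        _ < (r / (‖w‖ + 1)) * (‖w‖ + 1) := by
            exact mul_lt_mul_of_pos_right ht (by positivity)
        _ = r := by field_simp
    exact stepA m _ hmem fun j hj => absurd j.isLt (not_lt.2 hj)
  have := hφa.eqOn_zero_of_preconnected_of_eventuallyEq_zero hΩconv.isPreconnected h0 hev h1
  simpa [hw] using this

/-- **Schwarz reflection for pluriharmonic functions.**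
Let `V` be an open convex subset of `ℂ^m` meeting `ℝ^m`, and let `h : V → ℝ` be a
`C²` pluriharmonic function (all mixed Wirtinger derivatives `∂²h/∂z_j∂z̄_k` vanish,
expressed here in real coordinates as
`∂²h/∂x_j∂x_k + ∂²h/∂y_j∂y_k = 0` and `∂²h/∂x_j∂y_k − ∂²h/∂y_j∂x_k = 0`)
which vanishes on `V ∩ ℝ^m` and satisfies `h(z̄) = h(z)` whenever `z, z̄ ∈ V`.
Then `h` is identically zero on `V`. -/
theorem pluriharmonic_reflection_vanishes
    (m : ℕ) (hm : 0 < m) (V : Set (Fin m → ℂ))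
    (hVopen : IsOpen V) (hVconv : Convex ℝ V)
    (hVreal : ∃ z ∈ V, ∀ j, (z j).im = 0)
    (h : (Fin m → ℂ) → ℝ)
    (hC2 : ContDiffOn ℝ 2 h V)
    (hpluri : ∀ z ∈ V, ∀ j k : Fin m,
      (fderiv ℝ (fun y => fderiv ℝ h y (Pi.single k (1 : ℂ))) z (Pi.single j (1 : ℂ))
        + fderiv ℝ (fun y => fderiv ℝ h y (Pi.single k (Complex.I))) z
            (Pi.single j (Complex.I)) = 0)
      ∧ (fderiv ℝ (fun y => fderiv ℝ h y (Pi.single k (Complex.I))) z (Pi.single j (1 : ℂ))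
        - fderiv ℝ (fun y => fderiv ℝ h y (Pi.single k (1 : ℂ))) z
            (Pi.single j (Complex.I)) = 0))
    (hzero : ∀ z ∈ V, (∀ j, (z j).im = 0) → h z = 0)
    (hsym : ∀ z ∈ V, (fun j => (starRingEnd ℂ) (z j)) ∈ V →
      h (fun j => (starRingEnd ℂ) (z j)) = h z) :
    ∀ z ∈ V, h z = 0 := by
  obtain ⟨p, hpV, hpre⟩ := hVreal
  have hdiff : DifferentiableOn ℝ h V := hC2.differentiableOn (by norm_num)
  have hfd : DifferentiableOn ℝ (fderiv ℝ h) V :=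
    (hC2.fderiv_of_isOpen hVopen (by norm_num)).differentiableOn
      (one_ne_zero : (1 : WithTop ℕ∞) ≠ 0)
  -- derivative along a line
  have hline : ∀ q ∈ V, ∀ v : Fin m → ℂ,
      HasDerivAt (fun t : ℝ => h (q + t • v)) (fderiv ℝ h q v) 0 := by
    intro q hq v
    have hL : HasDerivAt (fun t : ℝ => q + t • v) v 0 := by
      have := ((hasDerivAt_id (0:ℝ)).smul_const v).const_add q
      simpa using this
    have hd : DifferentiableAt ℝ h q := hdiff.differentiableAt (hVopen.mem_nhds hq)
    have hg0 : q + (0:ℝ) • v = q := by simp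
    have hfd' : HasFDerivAt h (fderiv ℝ h q) ((fun t : ℝ => q + t • v) 0) := by
      simpa [hg0] using hd.hasFDerivAt
    exact hfd'.comp_hasDerivAt 0 hL
  -- small parameters stay in a ball
  have hsmall : ∀ (q : Fin m → ℂ) (ε : ℝ), 0 < ε → ∀ (v : Fin m → ℂ) (t : ℝ),
      |t| < ε / (‖v‖ + 1) → q + t • v ∈ Metric.ball q ε := by
    intro q ε hε v t ht
    rw [Metric.mem_ball, dist_eq_norm, add_sub_cancel_left, norm_smul, Real.norm_eq_abs]
    calc |t| * ‖v‖ ≤ |t| * (‖v‖ + 1) := by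
          exact mul_le_mul_of_nonneg_left (by linarith) (abs_nonneg t)
      _ < (ε / (‖v‖ + 1)) * (‖v‖ + 1) := by
          refine mul_lt_mul_of_pos_right ht (by positivity)
      _ = ε := by field_simp
  -- vanishing of derivatives in real directions at real points
  have hder_real : ∀ q ∈ V, (∀ j, (q j).im = 0) → ∀ v : Fin m → ℂ,
      (∀ j, (v j).im = 0) → fderiv ℝ h q v = 0 := by
    intro q hq hqre v hv
    obtain ⟨ε, hε, hball⟩ := Metric.isOpen_iff.1 hVopen q hq
    have hδ : 0 < ε / (‖v‖ + 1) := by positivity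
    have hev : (fun t : ℝ => h (q + t • v)) =ᶠ[𝓝 (0:ℝ)] fun _ => 0 := by
      refine Filter.eventuallyEq_of_mem (Metric.ball_mem_nhds (0:ℝ) hδ) ?_
      intro t ht
      rw [Real.ball_eq_Ioo] at ht
      have htabs : |t| < ε / (‖v‖ + 1) := by
        rw [abs_lt]; constructor <;> [linarith [ht.1]; linarith [ht.2]]
      refine hzero _ (hball (hsmall q ε hε v t htabs)) ?_
      intro j
      simp [Complex.add_im, hqre j, Complex.smul_im, hv j]
    have hconst : HasDerivAt (fun _ : ℝ => (0:ℝ)) (fderiv ℝ h q v) 0 :=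
      (hline q hq v).congr_of_eventuallyEq hev.symm
    exact ((hasDerivAt_const (0:ℝ) (0:ℝ)).unique hconst).symm
  -- vanishing of derivatives in imaginary coordinate directions at real points
  have hder_I : ∀ q ∈ V, (∀ j, (q j).im = 0) → ∀ k : Fin m,
      fderiv ℝ h q (Pi.single k Complex.I) = 0 := by
    intro q hq hqre k
    obtain ⟨ε, hε, hball⟩ := Metric.isOpen_iff.1 hVopen q hq
    set v : Fin m → ℂ := Pi.single k Complex.I with hvdef
    have hδ : 0 < ε / (‖v‖ + 1) := by positivity
    have hconj : ∀ t : ℝ, (fun j => (starRingEnd ℂ) ((q + t • v) j)) = q + (-t) • v := by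
      intro t
      funext j
      by_cases hj : j = k
      · subst hj
        simp only [hvdef, Pi.add_apply, Pi.smul_apply, Pi.single_eq_same]
        rw [Complex.real_smul, Complex.real_smul, map_add, map_mul, Complex.conj_ofReal,
          Complex.conj_I, Complex.conj_eq_iff_im.2 (hqre j)]
        push_cast
        ring
      · simp only [hvdef, Pi.add_apply, Pi.smul_apply, Pi.single_eq_of_ne hj, smul_zero,
          add_zero, Complex.conj_eq_iff_im.2 (hqre j)]
    have heven : (fun t : ℝ => h (q + (-t) • v)) =ᶠ[𝓝 (0:ℝ)] fun t => h (q + t • v) := by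
      refine Filter.eventuallyEq_of_mem (Metric.ball_mem_nhds (0:ℝ) hδ) ?_
      intro t ht
      rw [Real.ball_eq_Ioo] at ht
      have htabs : |t| < ε / (‖v‖ + 1) := by
        rw [abs_lt]; constructor <;> [linarith [ht.1]; linarith [ht.2]]
      have htabs' : |(-t)| < ε / (‖v‖ + 1) := by rwa [abs_neg]
      have h1 : q + t • v ∈ V := hball (hsmall q ε hε v t htabs)
      have h2 : q + (-t) • v ∈ V := hball (hsmall q ε hε v (-t) htabs')
      have := hsym (q + t • v) h1 (by rw [hconj t]; exact h2)
      rw [hconj t] at this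
      exact this
    set d : ℝ := fderiv ℝ h q v with hd
    have hh := hline q hq v
    have hh' : HasDerivAt (fun t : ℝ => h (q + t • v)) d (-(0:ℝ)) := by
      rw [neg_zero]; exact hh
    have hχ : HasDerivAt (fun t : ℝ => h (q + (-t) • v)) (d * (-1)) 0 :=
      HasDerivAt.comp 0 hh' (hasDerivAt_neg 0)
    have hψ2 : HasDerivAt (fun t : ℝ => h (q + t • v)) (d * (-1)) 0 :=
      hχ.congr_of_eventuallyEq heven.symm
    have := hh.unique hψ2
    linarith
  -- holomorphic Wirtinger derivative and conclusion for each coordinate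
  have hkey : ∀ z ∈ V, ∀ k : Fin m,
      fderiv ℝ h z (Pi.single k (1:ℂ)) = 0 ∧ fderiv ℝ h z (Pi.single k Complex.I) = 0 := by
    have main : ∀ k : Fin m, ∀ z ∈ V,
        ((fderiv ℝ h z (Pi.single k (1:ℂ)) : ℂ)
          - Complex.I * (fderiv ℝ h z (Pi.single k Complex.I) : ℂ)) = 0 := by
      intro k
      set G : (Fin m → ℂ) → ℂ := fun y =>
        ((fderiv ℝ h y (Pi.single k (1:ℂ)) : ℂ)
          - Complex.I * (fderiv ℝ h y (Pi.single k Complex.I) : ℂ)) with hGdef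
      have hG0 : ∀ q ∈ V, (∀ j, (q j).im = 0) → G q = 0 := by
        intro q hq hqre
        have h1 : fderiv ℝ h q (Pi.single k (1:ℂ)) = 0 := by
          refine hder_real q hq hqre _ ?_
          intro j
          by_cases hj : j = k
          · subst hj; simp
          · simp [Pi.single_eq_of_ne hj]
        have h2 : fderiv ℝ h q (Pi.single k Complex.I) = 0 := hder_I q hq hqre k
        simp [hGdef, h1, h2]
      have hGdiff : DifferentiableOn ℂ G V := by
        intro z hz
        have hDz : DifferentiableAt ℝ (fderiv ℝ h) z := hfd.differentiableAt (hVopen.mem_nhds hz)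
        have ha : DifferentiableAt ℝ (fun y => fderiv ℝ h y (Pi.single k (1:ℂ))) z :=
          hDz.clm_apply (differentiableAt_const _)
        have hb : DifferentiableAt ℝ (fun y => fderiv ℝ h y (Pi.single k Complex.I)) z :=
          hDz.clm_apply (differentiableAt_const _)
        set A := fderiv ℝ (fun y => fderiv ℝ h y (Pi.single k (1:ℂ))) z with hAdef
        set B := fderiv ℝ (fun y => fderiv ℝ h y (Pi.single k Complex.I)) z with hBdef
        set T : (Fin m → ℂ) →L[ℝ] ℂ :=
          Complex.ofRealCLM.comp A - Complex.I • Complex.ofRealCLM.comp B with hTdef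
        have hA' : HasFDerivAt (fun y => ((fderiv ℝ h y (Pi.single k (1:ℂ)) : ℝ) : ℂ))
            (Complex.ofRealCLM.comp A) z := Complex.ofRealCLM.hasFDerivAt.comp z ha.hasFDerivAt
        have hB' : HasFDerivAt (fun y => ((fderiv ℝ h y (Pi.single k Complex.I) : ℝ) : ℂ))
            (Complex.ofRealCLM.comp B) z := Complex.ofRealCLM.hasFDerivAt.comp z hb.hasFDerivAt
        have hB'' : HasFDerivAt
            (fun y => Complex.I * ((fderiv ℝ h y (Pi.single k Complex.I) : ℝ) : ℂ))
            (Complex.I • Complex.ofRealCLM.comp B) z := hB'.const_mul Complex.I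
        have hGR : HasFDerivAt G T z := hA'.sub hB''
        have hT1 : ∀ j : Fin m,
            T (Pi.single j Complex.I) = Complex.I * T (Pi.single j 1) := by
          intro j
          obtain ⟨e1, e2⟩ := hpluri z hz j k
          rw [← hAdef, ← hBdef] at e1 e2
          simp only [hTdef, ContinuousLinearMap.sub_apply, ContinuousLinearMap.smul_apply,
            ContinuousLinearMap.comp_apply, Complex.ofRealCLM_apply, smul_eq_mul]
          rw [Complex.ext_iff]
          constructor
          · simp only [Complex.sub_re, Complex.ofReal_re, Complex.mul_re, Complex.I_re,
              Complex.I_im, Complex.ofReal_im, Complex.sub_im, Complex.mul_im]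
            ring_nf
            linarith [e2]
          · simp only [Complex.sub_re, Complex.ofReal_re, Complex.mul_re, Complex.I_re,
              Complex.I_im, Complex.ofReal_im, Complex.sub_im, Complex.mul_im]
            ring_nf
            linarith [e1]
        have hTlin : ∀ v, T (Complex.I • v) = Complex.I * T v := clm_I_smul T hT1
        have hGC : HasFDerivAt (𝕜 := ℂ) G (clmOfReal T hTlin) z :=
          hasFDerivAt_of_restrictScalars ℝ hGR (clmOfReal_restrict T hTlin)
        exact hGC.differentiableAt.differentiableWithinAt
      exact holo_zero_of_real_zero hVopen hVconv hpV hpre hGdiff hG0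
    intro z hz k
    have := main k z hz
    rw [Complex.ext_iff] at this
    simp only [Complex.sub_re, Complex.ofReal_re, Complex.mul_re, Complex.I_re, Complex.I_im,
      Complex.ofReal_im, Complex.sub_im, Complex.mul_im, Complex.zero_re, Complex.zero_im] at this
    constructor <;> linarith [this.1, this.2]
  intro z hz
  have hfzero : ∀ x ∈ V, fderivWithin ℝ h V x = 0 := by
    intro x hx
    rw [fderivWithin_of_isOpen hVopen hx]
    apply ContinuousLinearMap.ext
    intro v
    rw [← vdecomp m v, map_sum]
    rw [ContinuousLinearMap.zero_apply]
    refine Finset.sum_eq_zero fun j _ => ?_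
    rw [map_add, map_smul, map_smul, (hkey x hx j).1, (hkey x hx j).2]
    simp
  have := hVconv.is_const_of_fderivWithin_eq_zero hdiff hfzero hz hpV
  rw [this]
  exact hzero p hpV hpre
end

section
/- Let W be a nonempty open connected subset of ℂ with W ∩ ℝ nonempty, and let f : W → ℝ be a harmonic function such that: (i) f(x) = 0 for all x ∈ W ∩ ℝ; and (ii) f(z̄) = f(z) for every z ∈ W with z̄ ∈ W. Then f is identically zero on W. -/
open Complex Metric Topology Filter

/-- Two real-linear continuous maps on `ℂ` agreeing at `1` and `I` are equal. -/
lemma clm_ext_complex {E : Type*} [NormedAddCommGroup E] [NormedSpace ℝ E]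
    (T S : ℂ →L[ℝ] E) (h1 : T 1 = S 1) (hI : T Complex.I = S Complex.I) : T = S := by
  ext w
  have hw : w = (w.re : ℝ) • (1:ℂ) + (w.im : ℝ) • Complex.I := by
    simp [Complex.ext_iff]
  rw [hw, map_add, map_add, map_smul, map_smul, map_smul, map_smul, h1, hI]

/-- At a real point of an open set, a function vanishing on the real points and
symmetric under conjugation has vanishing directional derivatives along `1` and `I`. -/
lemma real_point_derivs_vanish (f : ℂ → ℝ) (W : Set ℂ) (hWopen : IsOpen W)
    (x : ℂ) (hx : x ∈ W) (hxim : x.im = 0)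
    (hdiff : DifferentiableAt ℝ f x)
    (hzero : ∀ y ∈ W, y.im = 0 → f y = 0)
    (hsym : ∀ z ∈ W, (starRingEnd ℂ) z ∈ W → f ((starRingEnd ℂ) z) = f z) :
    fderiv ℝ f x 1 = 0 ∧ fderiv ℝ f x Complex.I = 0 := by
  obtain ⟨ρ, hρ, hball⟩ := Metric.isOpen_iff.1 hWopen x hx
  have hmem1 : ∀ s : ℝ, |s| < ρ → x + (s : ℂ) ∈ Metric.ball x ρ := by
    intro s hs
    simp only [Metric.mem_ball, dist_eq_norm, add_sub_cancel_left, Complex.norm_real,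
      Real.norm_eq_abs]
    exact hs
  have hmem2 : ∀ s : ℝ, |s| < ρ → x + (s : ℂ) * Complex.I ∈ Metric.ball x ρ := by
    intro s hs
    simp only [Metric.mem_ball, dist_eq_norm, add_sub_cancel_left, norm_mul, Complex.norm_real,
      Complex.norm_I, mul_one, Real.norm_eq_abs]
    exact hs
  constructor
  · have hline : HasDerivAt (fun s : ℝ => x + (s : ℂ)) 1 0 := by
      simpa using (Complex.ofRealCLM.hasDerivAt (x := (0:ℝ))).const_add x
    have hdiff1 : HasFDerivAt f (fderiv ℝ f x) (x + ((0:ℝ) : ℂ)) := by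
      rw [Complex.ofReal_zero, add_zero]; exact hdiff.hasFDerivAt
    have hφ : HasDerivAt (fun s : ℝ => f (x + (s : ℂ))) (fderiv ℝ f x 1) 0 :=
      hdiff1.comp_hasDerivAt 0 hline
    have hφ0 : HasDerivAt (fun s : ℝ => f (x + (s : ℂ))) 0 0 := by
      refine (hasDerivAt_const (0:ℝ) (0:ℝ)).congr_of_eventuallyEq ?_
      filter_upwards [Metric.ball_mem_nhds (0:ℝ) hρ] with s hs
      simp only [Metric.mem_ball, dist_zero_right, Real.norm_eq_abs] at hs
      exact hzero _ (hball (hmem1 s hs)) (by simp [hxim])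
    exact hφ.unique hφ0
  · have hline : HasDerivAt (fun s : ℝ => x + (s : ℂ) * Complex.I) Complex.I 0 := by
      simpa using ((Complex.ofRealCLM.hasDerivAt (x := (0:ℝ))).mul_const Complex.I).const_add x
    have hdiff1 : HasFDerivAt f (fderiv ℝ f x) (x + ((0:ℝ) : ℂ) * Complex.I) := by
      rw [Complex.ofReal_zero, zero_mul, add_zero]; exact hdiff.hasFDerivAt
    have hψ : HasDerivAt (fun s : ℝ => f (x + (s : ℂ) * Complex.I)) (fderiv ℝ f x Complex.I) 0 :=
      hdiff1.comp_hasDerivAt 0 hline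
    have hψn : HasDerivAt (fun s : ℝ => f (x + ((-s : ℝ) : ℂ) * Complex.I))
        (-(fderiv ℝ f x Complex.I)) 0 := by
      have hψ0 : HasDerivAt (fun s : ℝ => f (x + (s : ℂ) * Complex.I))
          (fderiv ℝ f x Complex.I) (-(0:ℝ)) := by rw [neg_zero]; exact hψ
      have h := hψ0.comp (0:ℝ) (hasDerivAt_neg (0:ℝ))
      rw [mul_neg_one] at h
      exact h
    have hev : (fun s : ℝ => f (x + (s : ℂ) * Complex.I))
        =ᶠ[nhds (0:ℝ)] (fun s : ℝ => f (x + ((-s : ℝ) : ℂ) * Complex.I)) := by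
      filter_upwards [Metric.ball_mem_nhds (0:ℝ) hρ] with s hs
      simp only [Metric.mem_ball, dist_zero_right, Real.norm_eq_abs] at hs
      have h1 : x + (s : ℂ) * Complex.I ∈ W := hball (hmem2 s hs)
      have h2 : x + ((-s : ℝ) : ℂ) * Complex.I ∈ W := hball (hmem2 (-s) (by simpa using hs))
      have hconj : (starRingEnd ℂ) (x + (s : ℂ) * Complex.I) = x + ((-s : ℝ) : ℂ) * Complex.I := by
        rw [map_add, map_mul, Complex.conj_I, Complex.conj_ofReal,
          (Complex.conj_eq_iff_im).2 hxim]
        push_cast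
        ring
      have := hsym _ h1 (hconj ▸ h2)
      rw [hconj] at this
      exact this.symm
    have hψ' : HasDerivAt (fun s : ℝ => f (x + (s : ℂ) * Complex.I))
        (-(fderiv ℝ f x Complex.I)) 0 := hψn.congr_of_eventuallyEq hev
    have := hψ.unique hψ'
    linarith

/-- **Schwarz reflection for harmonic functions vanishing on the real axis.**
Let `W ⊆ ℂ` be a nonempty open connected set meeting the real axis, and let
`f : W → ℝ` be harmonic (`C²` with `∂²f/∂x² + ∂²f/∂y² = 0`, expressed via iterated
directional derivatives along `1` and `I`), vanishing on `W ∩ ℝ`, and satisfying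
`f(z̄) = f(z)` whenever `z, z̄ ∈ W`.  Then `f` is identically zero on `W`. -/
theorem harmonic_reflection_vanishes
    (W : Set ℂ) (hWopen : IsOpen W) (hWconn : IsConnected W)
    (hWreal : ∃ x ∈ W, x.im = 0)
    (f : ℂ → ℝ) (hC2 : ContDiffOn ℝ 2 f W)
    (hharm : ∀ z ∈ W,
      fderiv ℝ (fun y => fderiv ℝ f y (1 : ℂ)) z (1 : ℂ)
        + fderiv ℝ (fun y => fderiv ℝ f y Complex.I) z Complex.I = 0)
    (hzero : ∀ x ∈ W, x.im = 0 → f x = 0)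
    (hsym : ∀ z ∈ W, (starRingEnd ℂ) z ∈ W → f ((starRingEnd ℂ) z) = f z) :
    ∀ z ∈ W, f z = 0 := by
  -- basic differentiability facts
  have hdiffOn : DifferentiableOn ℝ f W := hC2.differentiableOn (by norm_num)
  have hdiffAt : ∀ z ∈ W, DifferentiableAt ℝ f z := fun z hz =>
    hdiffOn.differentiableAt (hWopen.mem_nhds hz)
  have hFdiff : ∀ z ∈ W, DifferentiableAt ℝ (fderiv ℝ f) z := by
    intro z hz
    have h1 : ContDiffOn ℝ 1 (fderiv ℝ f) W := hC2.fderiv_of_isOpen hWopen (by norm_num)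
    exact (h1.differentiableOn one_ne_zero).differentiableAt (hWopen.mem_nhds hz)
  -- second derivatives: curried form and symmetry
  have hA : ∀ z ∈ W, ∀ v w : ℂ,
      fderiv ℝ (fun y => fderiv ℝ f y v) z w = fderiv ℝ (fderiv ℝ f) z w v := by
    intro z hz v w
    have := ((ContinuousLinearMap.apply ℝ ℝ v).hasFDerivAt.comp z
      (hFdiff z hz).hasFDerivAt).fderiv
    rw [show (fun y => fderiv ℝ f y v)
        = (ContinuousLinearMap.apply ℝ ℝ v) ∘ (fderiv ℝ f) from rfl, this]
    rfl
  have hsymm2 : ∀ z ∈ W, ∀ v w : ℂ,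
      fderiv ℝ (fderiv ℝ f) z v w = fderiv ℝ (fderiv ℝ f) z w v := by
    intro z hz v w
    have hev : ∀ᶠ y in nhds z, HasFDerivAt f (fderiv ℝ f y) y := by
      filter_upwards [hWopen.mem_nhds hz] with y hy
      exact (hdiffAt y hy).hasFDerivAt
    exact second_derivative_symmetric_of_eventually hev (hFdiff z hz).hasFDerivAt v w
  -- the holomorphic derivative function
  set g : ℂ → ℂ := fun y =>
    ((fderiv ℝ f y 1 : ℝ) : ℂ) - Complex.I * ((fderiv ℝ f y Complex.I : ℝ) : ℂ) with hgdef
  have hg : DifferentiableOn ℂ g W := by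
    intro z hz
    set F := fderiv ℝ f
    set A := fderiv ℝ F z with hAdef
    have hAz : HasFDerivAt F A z := (hFdiff z hz).hasFDerivAt
    have hsymm : A 1 Complex.I = A Complex.I 1 := hsymm2 z hz 1 Complex.I
    have hharm' : A 1 1 + A Complex.I Complex.I = 0 := by
      have h := hharm z hz
      rw [hA z hz 1 1, hA z hz Complex.I Complex.I] at h
      exact h
    set c : ℂ := ((A 1 1 : ℝ) : ℂ) - Complex.I * ((A 1 Complex.I : ℝ) : ℂ) with hc
    have h1 : HasFDerivAt (fun y => ((F y 1 : ℝ) : ℂ))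
        (Complex.ofRealCLM.comp ((ContinuousLinearMap.apply ℝ ℝ (1:ℂ)).comp A)) z :=
      Complex.ofRealCLM.hasFDerivAt.comp z
        ((ContinuousLinearMap.apply ℝ ℝ (1:ℂ)).hasFDerivAt.comp z hAz)
    have h2 : HasFDerivAt (fun y => Complex.I * ((F y Complex.I : ℝ) : ℂ))
        (Complex.I • (Complex.ofRealCLM.comp
          ((ContinuousLinearMap.apply ℝ ℝ (Complex.I)).comp A))) z :=
      (Complex.ofRealCLM.hasFDerivAt.comp z
        ((ContinuousLinearMap.apply ℝ ℝ (Complex.I)).hasFDerivAt.comp z hAz)).const_mul Complex.I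
    have hM := h1.sub h2
    set L' : ℂ →L[ℂ] ℂ := c • (ContinuousLinearMap.id ℂ ℂ) with hL'
    refine ((hasFDerivAt_of_restrictScalars ℝ (f' := L')
      hM ?_).differentiableAt).differentiableWithinAt
    ext1 w
    show c • w = _
    have hw : w = (w.re : ℝ) • (1:ℂ) + (w.im : ℝ) • Complex.I := by simp [Complex.ext_iff]
    rw [hw]
    simp only [map_add, map_smul, ContinuousLinearMap.add_apply, ContinuousLinearMap.smul_apply,
      ContinuousLinearMap.sub_apply, ContinuousLinearMap.coe_comp', Function.comp_apply,
      ContinuousLinearMap.apply_apply, Complex.ofRealCLM_apply, smul_add, smul_smul]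
    have hAI1 : ((A Complex.I 1 : ℝ) : ℂ) = ((A 1 Complex.I : ℝ) : ℂ) := by rw [hsymm]
    have hAII : ((A Complex.I Complex.I : ℝ) : ℂ) = -((A 1 1 : ℝ) : ℂ) := by
      have : A Complex.I Complex.I = -(A 1 1) := by linarith
      rw [this]; push_cast; ring
    rw [hAI1, hAII, hc]
    simp only [Complex.real_smul, smul_eq_mul]
    linear_combination (-(w.im:ℂ) * ((A 1 Complex.I : ℝ) : ℂ)) * Complex.I_sq
  -- g vanishes at all real points of W
  have hgreal : ∀ x ∈ W, x.im = 0 → g x = 0 := by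
    intro x hx hxim
    obtain ⟨h1, h2⟩ := real_point_derivs_vanish f W hWopen x hx hxim (hdiffAt x hx) hzero hsym
    simp [hgdef, h1, h2]
  -- g vanishes frequently near the real point x₀
  obtain ⟨x₀, hx₀W, hx₀im⟩ := hWreal
  obtain ⟨r, hr, hballr⟩ := Metric.isOpen_iff.1 hWopen x₀ hx₀W
  have hfreq : ∃ᶠ z in 𝓝[≠] x₀, g z = 0 := by
    have htend : Filter.Tendsto (fun t : ℝ => x₀ + (t : ℂ)) (𝓝[≠] (0:ℝ)) (𝓝[≠] x₀) := by
      apply Filter.Tendsto.inf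
      · have hc : Continuous (fun t : ℝ => x₀ + (t : ℂ)) := by continuity
        exact hc.tendsto' 0 x₀ (by simp)
      · rw [Filter.tendsto_principal]
        rw [Filter.eventually_principal]
        intro t ht
        simp only [Set.mem_compl_iff, Set.mem_singleton_iff] at ht ⊢
        intro h
        apply ht
        have : ((t:ℂ)) = 0 := by linear_combination h
        exact_mod_cast this
    have hev0 : ∀ᶠ t : ℝ in 𝓝 0, g (x₀ + (t : ℂ)) = 0 := by
      filter_upwards [Metric.ball_mem_nhds (0:ℝ) hr] with t ht
      simp only [Metric.mem_ball, dist_zero_right, Real.norm_eq_abs] at ht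
      have hmem : x₀ + (t : ℂ) ∈ W := by
        apply hballr
        simp only [Metric.mem_ball, dist_eq_norm, add_sub_cancel_left, Complex.norm_real,
          Real.norm_eq_abs]
        exact ht
      exact hgreal _ hmem (by simp [hx₀im])
    have hev : ∀ᶠ t : ℝ in 𝓝[≠] 0, g (x₀ + (t : ℂ)) = 0 :=
      hev0.filter_mono nhdsWithin_le_nhds
    exact htend.frequently hev.frequently
  -- identity theorem: g ≡ 0 on W
  have hgzero : Set.EqOn g 0 W :=
    (hg.analyticOnNhd hWopen).eqOn_zero_of_preconnected_of_frequently_eq_zero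
      hWconn.isPreconnected hx₀W hfreq
  -- hence fderiv f ≡ 0 on W
  have hF0 : ∀ z ∈ W, fderiv ℝ f z = 0 := by
    intro z hz
    have h := hgzero hz
    simp only [hgdef, Pi.zero_apply] at h
    rw [Complex.ext_iff] at h
    simp only [Complex.sub_re, Complex.sub_im, Complex.ofReal_re, Complex.ofReal_im,
      Complex.mul_re, Complex.mul_im, Complex.I_re, Complex.I_im, Complex.zero_re,
      Complex.zero_im] at h
    obtain ⟨h1, h2⟩ := h
    refine clm_ext_complex _ _ ?_ ?_ <;> simp only [ContinuousLinearMap.zero_apply]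
    · linarith
    · linarith
  -- locally constant, hence zero by connectedness
  set O₁ : Set ℂ := {z | z ∈ W ∧ f z = 0} with hO₁
  set O₂ : Set ℂ := {z | z ∈ W ∧ f z ≠ 0} with hO₂
  have hkey : ∀ z ∈ W, ∀ ρ > 0, Metric.ball z ρ ⊆ W → ∀ w ∈ Metric.ball z ρ, f w = f z := by
    intro z hz ρ hρ hball w hw
    exact Convex.is_const_of_fderivWithin_eq_zero (convex_ball z ρ) (hdiffOn.mono hball)
      (fun y hy => by rw [fderivWithin_of_isOpen Metric.isOpen_ball hy]; exact hF0 y (hball hy))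
      hw (Metric.mem_ball_self hρ)
  have hO₁open : IsOpen O₁ := by
    rw [Metric.isOpen_iff]
    rintro z ⟨hzW, hz0⟩
    obtain ⟨ρ, hρ, hball⟩ := Metric.isOpen_iff.1 hWopen z hzW
    exact ⟨ρ, hρ, fun w hw => ⟨hball hw, by rw [hkey z hzW ρ hρ hball w hw, hz0]⟩⟩
  have hO₂open : IsOpen O₂ := by
    rw [Metric.isOpen_iff]
    rintro z ⟨hzW, hz0⟩
    obtain ⟨ρ, hρ, hball⟩ := Metric.isOpen_iff.1 hWopen z hzW
    exact ⟨ρ, hρ, fun w hw => ⟨hball hw, by rw [hkey z hzW ρ hρ hball w hw]; exact hz0⟩⟩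
  intro z hz
  by_contra hfz
  have hcover : W ⊆ O₁ ∪ O₂ := fun w hw => by
    by_cases h : f w = 0
    · exact Or.inl ⟨hw, h⟩
    · exact Or.inr ⟨hw, h⟩
  have hne1 : (W ∩ O₁).Nonempty := ⟨x₀, hx₀W, hx₀W, hzero x₀ hx₀W hx₀im⟩
  have hne2 : (W ∩ O₂).Nonempty := ⟨z, hz, hz, hfz⟩
  obtain ⟨w, -, ⟨-, hw1⟩, ⟨-, hw2⟩⟩ :=
    hWconn.isPreconnected O₁ O₂ hO₁open hO₂open hcover hne1 hne2
  exact hw2 hw1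
end

section
/- Let m be a positive integer, V a nonempty open convex subset of ℂ^m, and h : V → ℝ a twice continuously differentiable pluriharmonic function (∂²h/∂z_j∂z̄_k = 0 on V for all j,k). Then there exists a holomorphic function F : V → ℂ with F(z) ≠ 0 for all z ∈ V, such that h(z) = log(|F(z)|²) for all z ∈ V. -/
open MeasureTheory Metric

theorem phf_single_decomp {m : ℕ} (j : Fin m) (c : ℂ) :
    (Pi.single j c : Fin m → ℂ)
      = c.re • (Pi.single j (1:ℂ) : Fin m → ℂ)
        + c.im • (Pi.single j Complex.I : Fin m → ℂ) := by
  funext i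
  by_cases hij : i = j
  · subst hij
    simp [Complex.real_smul, Complex.re_add_im]
  · simp [Pi.single_apply, hij]

theorem phf_differentiableAt_of_CR {m : ℕ} {f : (Fin m → ℂ) → ℂ}
    {D : (Fin m → ℂ) →L[ℝ] ℂ} {z : Fin m → ℂ}
    (hf : HasFDerivAt f D z)
    (hD : ∀ j, D (Pi.single j Complex.I) = Complex.I * D (Pi.single j 1)) :
    DifferentiableAt ℂ f z := by
  set L : (Fin m → ℂ) →L[ℂ] ℂ :=
    ∑ j : Fin m, (ContinuousLinearMap.proj j :
      (Fin m → ℂ) →L[ℂ] ℂ).smulRight (D (Pi.single j 1)) with hL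
  have hsingle : ∀ (j : Fin m) (c : ℂ),
      (Pi.single j c : Fin m → ℂ) = c.re • (Pi.single j (1:ℂ) : Fin m → ℂ) + c.im • (Pi.single j Complex.I : Fin m → ℂ) := by
    intro j c
    funext i
    by_cases hij : i = j
    · subst hij
      simp [Complex.real_smul, Complex.re_add_im]
    · simp [Pi.single_apply, hij]
  have hDc : ∀ (j : Fin m) (c : ℂ), D (Pi.single j c) = c * D (Pi.single j 1) := by
    intro j c
    rw [hsingle j c, map_add, _root_.map_smul, _root_.map_smul, hD j]
    simp only [Complex.real_smul]
    nth_rewrite 3 [← Complex.re_add_im c]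
    ring
  have hLD : ∀ v, L v = D v := by
    intro v
    conv_rhs => rw [← Finset.univ_sum_single v, map_sum]
    rw [hL, ContinuousLinearMap.sum_apply]
    refine Finset.sum_congr rfl fun j _ => ?_
    rw [hDc j (v j)]
    rfl
  exact (hasFDerivAt_of_restrictScalars ℝ (f' := L) hf
    (by ext v; exact hLD v)).differentiableAt

set_option maxHeartbeats 1000000 in
/-- **Holomorphic factorization of pluriharmonic functions.**
Let `V ⊆ ℂ^m` be a nonempty open convex set and `h : V → ℝ` a `C²` pluriharmonic
function (all mixed Wirtinger derivatives `∂²h/∂z_j∂z̄_k` vanish, expressed in real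
coordinates).  Then there is a nowhere-vanishing holomorphic function `F : V → ℂ`
with `h = log |F|²` on `V`. -/
theorem pluriharmonic_eq_log_sq_abs_holomorphic
    (m : ℕ) (hm : 0 < m) (V : Set (Fin m → ℂ))
    (hVopen : IsOpen V) (hVconv : Convex ℝ V) (hVne : V.Nonempty)
    (h : (Fin m → ℂ) → ℝ)
    (hC2 : ContDiffOn ℝ 2 h V)
    (hpluri : ∀ z ∈ V, ∀ j k : Fin m,
      (fderiv ℝ (fun y => fderiv ℝ h y (Pi.single k (1 : ℂ))) z (Pi.single j (1 : ℂ))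
        + fderiv ℝ (fun y => fderiv ℝ h y (Pi.single k (Complex.I))) z
            (Pi.single j (Complex.I)) = 0)
      ∧ (fderiv ℝ (fun y => fderiv ℝ h y (Pi.single k (Complex.I))) z (Pi.single j (1 : ℂ))
        - fderiv ℝ (fun y => fderiv ℝ h y (Pi.single k (1 : ℂ))) z
            (Pi.single j (Complex.I)) = 0)) :
    ∃ F : (Fin m → ℂ) → ℂ,
      DifferentiableOn ℂ F V ∧
      (∀ z ∈ V, F z ≠ 0) ∧
      (∀ z ∈ V, h z = Real.log (‖F z‖ ^ 2)) := by
  obtain ⟨z₀, hz₀⟩ := hVne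
  -- the (doubled) Wirtinger gradient of h
  set g : (Fin m → ℂ) → Fin m → ℂ := fun z k =>
    ((fderiv ℝ h z (Pi.single k 1) : ℝ) : ℂ)
      - Complex.I * ((fderiv ℝ h z (Pi.single k Complex.I) : ℝ) : ℂ) with hg_def
  -- differentiability of h
  have hdiffh : ∀ z ∈ V, DifferentiableAt ℝ h z := by
    intro z hz
    exact (((hC2.of_le one_le_two).differentiableOn one_ne_zero) z hz).differentiableAt
      (hVopen.mem_nhds hz)
  -- directional derivatives of h are C¹ on V
  have hAC1 : ∀ w : Fin m → ℂ, ContDiffOn ℝ 1 (fun z => fderiv ℝ h z w) V := by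
    intro w
    have h1 := ContDiffOn.fderiv_of_isOpen (m := 1) hC2 hVopen (by norm_num)
    exact h1.clm_apply contDiffOn_const
  have hAdiff : ∀ w : Fin m → ℂ, ∀ z ∈ V,
      HasFDerivAt (fun y => fderiv ℝ h y w) (fderiv ℝ (fun y => fderiv ℝ h y w) z) z := by
    intro w z hz
    exact (((hAC1 w).differentiableOn one_ne_zero z hz).differentiableAt
      (hVopen.mem_nhds hz)).hasFDerivAt
  -- g is real-C¹ on V componentwise
  have hgC1 : ∀ k, ContDiffOn ℝ 1 (fun z => g z k) V := by
    intro k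
    have h1 : ContDiffOn ℝ 1 (fun z => ((fderiv ℝ h z (Pi.single k 1) : ℝ) : ℂ)) V :=
      Complex.ofRealCLM.contDiff.comp_contDiffOn (hAC1 _)
    have h2 : ContDiffOn ℝ 1 (fun z => ((fderiv ℝ h z (Pi.single k Complex.I) : ℝ) : ℂ)) V :=
      Complex.ofRealCLM.contDiff.comp_contDiffOn (hAC1 _)
    exact h1.sub (contDiffOn_const.mul h2)
  -- g is holomorphic componentwise on V
  have hghol : ∀ z ∈ V, ∀ k, DifferentiableAt ℂ (fun w => g w k) z := by
    intro z hz k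
    set A' := fderiv ℝ (fun y => fderiv ℝ h y (Pi.single k 1)) z with hA'
    set B' := fderiv ℝ (fun y => fderiv ℝ h y (Pi.single k Complex.I)) z with hB'
    have hA1 : HasFDerivAt (fun y => ((fderiv ℝ h y (Pi.single k 1) : ℝ) : ℂ))
        (Complex.ofRealCLM.comp A') z :=
      Complex.ofRealCLM.hasFDerivAt.comp z (hAdiff _ z hz)
    have hB1 : HasFDerivAt (fun y => ((fderiv ℝ h y (Pi.single k Complex.I) : ℝ) : ℂ))
        (Complex.ofRealCLM.comp B') z :=
      Complex.ofRealCLM.hasFDerivAt.comp z (hAdiff _ z hz)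
    have hDg : HasFDerivAt (fun w => g w k)
        (Complex.ofRealCLM.comp A' - Complex.I • Complex.ofRealCLM.comp B') z := by
      exact hA1.sub (hB1.const_mul Complex.I)
    apply phf_differentiableAt_of_CR hDg
    intro j
    obtain ⟨H1, H2⟩ := hpluri z hz j k
    rw [← hA', ← hB'] at H1 H2
    simp only [ContinuousLinearMap.sub_apply, ContinuousLinearMap.smul_apply,
      ContinuousLinearMap.coe_comp', Function.comp_apply, Complex.ofRealCLM_apply,
      smul_eq_mul]
    have e1 : A' (Pi.single j Complex.I) = B' (Pi.single j 1) := by linarith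
    have e2 : B' (Pi.single j Complex.I) = - A' (Pi.single j 1) := by linarith
    rw [e1, e2]
    push_cast
    ring_nf
    rw [Complex.I_sq]
    ring
  have hgcont : ∀ k, ContinuousOn (fun z => g z k) V := fun k => (hgC1 k).continuousOn
  -- continuity of the complex derivatives of g
  have hgfcont : ∀ k, ContinuousOn (fun z => fderiv ℂ (fun w => g w k) z) V := by
    intro k
    have hR : ContinuousOn (fun z => fderiv ℝ (fun w => g w k) z) V :=
      (hgC1 k).continuousOn_fderiv_of_isOpen hVopen le_rfl
    have hiso : Isometry (ContinuousLinearMap.restrictScalars ℝ :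
        ((Fin m → ℂ) →L[ℂ] ℂ) → ((Fin m → ℂ) →L[ℝ] ℂ)) := by
      have := (ContinuousLinearMap.restrictScalarsIsometry ℂ (Fin m → ℂ) ℂ ℝ ℝ).isometry
      rwa [ContinuousLinearMap.coe_restrictScalarsIsometry] at this
    rw [hiso.isEmbedding.continuousOn_iff]
    apply hR.congr
    intro z hz
    exact ((hghol z hz k).fderiv_restrictScalars ℝ).symm
  -- segments from z₀ stay in V
  have hseg : ∀ z ∈ V, ∀ t ∈ Set.Icc (0:ℝ) 1, z₀ + t • (z - z₀) ∈ V := by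
    intro z hz t ht
    have := hVconv hz₀ hz (by linarith [ht.2] : (0:ℝ) ≤ 1 - t) ht.1 (by ring)
    convert this using 1
    module
  set Ψ : ℝ → (Fin m → ℂ) → ℂ :=
    fun t x => ∑ k, g (z₀ + t • (x - z₀)) k * (x k - z₀ k) with hΨ_def
  have hΨcont : ∀ z ∈ V, ContinuousOn (fun t => Ψ t z) (Set.Icc (0:ℝ) 1) := by
    intro z hz
    refine continuousOn_finset_sum _ fun k _ => ContinuousOn.mul ?_ continuousOn_const
    have hγ : ContinuousOn (fun t : ℝ => z₀ + t • (z - z₀)) (Set.Icc 0 1) := by fun_prop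
    exact (hgcont k).comp hγ (fun t ht => hseg z hz t ht)
  have hΨint : ∀ z ∈ V, IntegrableOn (fun t => Ψ t z) (Set.Ioc (0:ℝ) 1) := by
    intro z hz
    exact ((hΨcont z hz).integrableOn_Icc).mono_set Set.Ioc_subset_Icc_self
  set P : (Fin m → ℂ) → ℂ := fun x => ∫ t in Set.Ioc (0:ℝ) 1, Ψ t x with hP_def
  -- P is holomorphic on V
  have hPdiff : ∀ x ∈ V, DifferentiableAt ℂ P x := by
    intro x₁ hx₁
    obtain ⟨ε, hε, hballV⟩ : ∃ ε > 0, closedBall x₁ ε ⊆ V := by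
      obtain ⟨δ, hδ, hb⟩ := Metric.isOpen_iff.1 hVopen x₁ hx₁
      exact ⟨δ/2, by linarith, (closedBall_subset_ball (by linarith)).trans hb⟩
    set Γ : ℝ → (Fin m → ℂ) → (Fin m → ℂ) := fun t x => z₀ + t • (x - z₀) with hΓ_def
    set K : Set (Fin m → ℂ) := (fun p : ℝ × (Fin m → ℂ) => z₀ + p.1 • (p.2 - z₀)) ''
      (Set.Icc (0:ℝ) 1 ×ˢ closedBall x₁ ε) with hK_def
    have hKcomp : IsCompact K :=
      ((isCompact_Icc).prod (isCompact_closedBall _ _)).image (by fun_prop)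
    have hKV : K ⊆ V := by
      rintro _ ⟨⟨t, x⟩, ⟨ht, hx⟩, rfl⟩
      exact hseg x (hballV hx) t ht
    have hz₀K : z₀ ∈ K := by
      refine ⟨(0, x₁), ⟨⟨le_rfl, zero_le_one⟩, mem_closedBall_self hε.le⟩, by simp⟩
    have hΓmem : ∀ t ∈ Set.Icc (0:ℝ) 1, ∀ x ∈ closedBall x₁ ε, Γ t x ∈ K := by
      intro t ht x hx
      exact ⟨(t, x), ⟨ht, hx⟩, rfl⟩
    obtain ⟨C0, hC0⟩ : ∃ C0, ∀ w ∈ K, ‖g w‖ ≤ C0 :=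
      hKcomp.exists_bound_of_continuousOn ((continuousOn_pi.2 hgcont).mono hKV)
    choose C1 hC1 using fun k : Fin m =>
      hKcomp.exists_bound_of_continuousOn ((hgfcont k).mono hKV)
    set R : ℝ := ε + ‖x₁ - z₀‖ with hR_def
    have hxR : ∀ x ∈ ball x₁ ε, ∀ k : Fin m, ‖x k - z₀ k‖ ≤ R := by
      intro x hx k
      have h1 : ‖x k - z₀ k‖ ≤ ‖x - z₀‖ := by
        simpa using norm_le_pi_norm (x - z₀) k
      have h2 : ‖x - z₀‖ ≤ ‖x - x₁‖ + ‖x₁ - z₀‖ := norm_sub_le_norm_sub_add_norm_sub x x₁ z₀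
      have h3 : ‖x - x₁‖ ≤ ε := le_of_lt (mem_ball_iff_norm.1 hx)
      linarith
    -- the candidate derivative
    set D : ℝ → (Fin m → ℂ) → ((Fin m → ℂ) →L[ℂ] ℂ) := fun t x =>
      ∑ k, ((g (Γ t x) k) • (ContinuousLinearMap.proj k : (Fin m → ℂ) →L[ℂ] ℂ)
        + (x k - z₀ k) • ((fderiv ℂ (fun y => g y k) (Γ t x)).comp
            ((t : ℂ) • ContinuousLinearMap.id ℂ (Fin m → ℂ)))) with hD_def
    have hΓfun : ∀ t : ℝ,
        Γ t = fun y : Fin m → ℂ => (t : ℂ) • y + (z₀ - (t : ℂ) • z₀) := by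
      intro t
      funext y
      simp only [hΓ_def]
      rw [← Complex.coe_smul]
      module
    have hΓd : ∀ (t : ℝ) (x : Fin m → ℂ),
        HasFDerivAt (Γ t) ((t : ℂ) • ContinuousLinearMap.id ℂ (Fin m → ℂ)) x := by
      intro t x
      rw [hΓfun t]
      exact ((hasFDerivAt_id x).const_smul ((t:ℂ))).add_const _
    have hdiffΨ : ∀ t ∈ Set.Icc (0:ℝ) 1, ∀ x ∈ ball x₁ ε,
        HasFDerivAt (fun y => Ψ t y) (D t x) x := by
      intro t ht x hx
      simp only [hΨ_def, hD_def]
      apply HasFDerivAt.fun_sum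
      intro k _
      have hmem : Γ t x ∈ V := hKV (hΓmem t ht x (ball_subset_closedBall hx))
      have hu : HasFDerivAt (fun y => g (Γ t y) k)
          ((fderiv ℂ (fun y => g y k) (Γ t x)).comp
            ((t : ℂ) • ContinuousLinearMap.id ℂ (Fin m → ℂ))) x :=
        (hghol (Γ t x) hmem k).hasFDerivAt.comp x (hΓd t x)
      have hv : HasFDerivAt (fun y : Fin m → ℂ => y k - z₀ k)
          (ContinuousLinearMap.proj k : (Fin m → ℂ) →L[ℂ] ℂ) x :=
        by simpa using ((ContinuousLinearMap.proj k : (Fin m → ℂ) →L[ℂ] ℂ).hasFDerivAt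
          (x := x)).sub_const (z₀ k)
      exact hu.mul hv
    -- norm bound for the derivative
    have hDbound : ∀ t ∈ Set.Icc (0:ℝ) 1, ∀ x ∈ ball x₁ ε,
        ‖D t x‖ ≤ ∑ k, (C0 + R * C1 k) := by
      intro t ht x hx
      simp only [hD_def]
      refine (norm_sum_le _ _).trans (Finset.sum_le_sum fun k _ => ?_)
      have hΓK : Γ t x ∈ K := hΓmem t ht x (ball_subset_closedBall hx)
      have hb1 : ‖(g (Γ t x) k) • (ContinuousLinearMap.proj k :
          (Fin m → ℂ) →L[ℂ] ℂ)‖ ≤ C0 := by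
        refine (norm_smul_le (g (Γ t x) k) (ContinuousLinearMap.proj k :
          (Fin m → ℂ) →L[ℂ] ℂ)).trans ?_
        have hp : ‖(ContinuousLinearMap.proj k : (Fin m → ℂ) →L[ℂ] ℂ)‖ ≤ 1 :=
          ContinuousLinearMap.opNorm_le_bound _ zero_le_one
            (fun v => by simpa using norm_le_pi_norm v k)
        have hg1 : ‖g (Γ t x) k‖ ≤ C0 :=
          le_trans (by simpa using norm_le_pi_norm (g (Γ t x)) k) (hC0 _ hΓK)
        simpa using mul_le_mul hg1 hp (norm_nonneg _)
          ((norm_nonneg (g (Γ t x) k)).trans hg1)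
      have hb2 : ‖(x k - z₀ k) • ((fderiv ℂ (fun y => g y k) (Γ t x)).comp
          ((t : ℂ) • ContinuousLinearMap.id ℂ (Fin m → ℂ)))‖ ≤ R * C1 k := by
        refine (norm_smul_le (x k - z₀ k) ((fderiv ℂ (fun y => g y k) (Γ t x)).comp
          ((t : ℂ) • ContinuousLinearMap.id ℂ (Fin m → ℂ)))).trans ?_
        have hcomp : ‖(fderiv ℂ (fun y => g y k) (Γ t x)).comp
            ((t : ℂ) • ContinuousLinearMap.id ℂ (Fin m → ℂ))‖ ≤ C1 k := by
          refine (ContinuousLinearMap.opNorm_comp_le _ _).trans ?_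
          have hid : ‖(t : ℂ) • ContinuousLinearMap.id ℂ (Fin m → ℂ)‖ ≤ 1 := by
            refine (norm_smul_le ((t:ℂ)) (ContinuousLinearMap.id ℂ (Fin m → ℂ))).trans ?_
            have ht1 : ‖(t : ℂ)‖ ≤ 1 := by
              rw [Complex.norm_real, Real.norm_eq_abs, abs_of_nonneg ht.1]
              exact ht.2
            simpa using mul_le_mul ht1 ContinuousLinearMap.norm_id_le
              (norm_nonneg _) zero_le_one
          simpa using mul_le_mul (hC1 k _ hΓK) hid (norm_nonneg _)
            ((norm_nonneg _).trans (hC1 k _ hΓK))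
        exact mul_le_mul (hxR x hx k) hcomp (norm_nonneg _)
          ((norm_nonneg (x k - z₀ k)).trans (hxR x hx k))
      exact (norm_add_le _ _).trans (add_le_add hb1 hb2)
    -- apply differentiation under the integral sign
    have key : HasFDerivAt P
        (∫ t in Set.Ioc (0:ℝ) 1, D t x₁ ∂volume) x₁ := by
      have hF_meas : ∀ᶠ x in nhds x₁,
          AEStronglyMeasurable (fun t => Ψ t x) (volume.restrict (Set.Ioc (0:ℝ) 1)) := by
        filter_upwards [ball_mem_nhds x₁ hε] with x hx
        exact ((hΨcont x (hballV (ball_subset_closedBall hx))).mono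
          Set.Ioc_subset_Icc_self).aestronglyMeasurable measurableSet_Ioc
      have hF_int : Integrable (fun t => Ψ t x₁) (volume.restrict (Set.Ioc (0:ℝ) 1)) :=
        hΨint x₁ hx₁
      have hF'_meas : AEStronglyMeasurable (fun t => D t x₁)
          (volume.restrict (Set.Ioc (0:ℝ) 1)) := by
        have hDcont : ContinuousOn (fun t => D t x₁) (Set.Icc (0:ℝ) 1) := by
          rw [hD_def]
          refine continuousOn_finset_sum _ fun k _ => ContinuousOn.add ?_ ?_
          · have hΓc : ContinuousOn (fun t : ℝ => Γ t x₁) (Set.Icc 0 1) := by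
              simp only [hΓ_def]; fun_prop
            have hmaps : ∀ t ∈ Set.Icc (0:ℝ) 1, Γ t x₁ ∈ V := fun t ht =>
              hKV (hΓmem t ht x₁ (mem_closedBall_self hε.le))
            exact (((hgcont k).comp hΓc hmaps).smul continuousOn_const)
          · refine ContinuousOn.fun_smul continuousOn_const ?_
            have hΓc : ContinuousOn (fun t : ℝ => Γ t x₁) (Set.Icc 0 1) := by
              simp only [hΓ_def]; fun_prop
            have hmaps : ∀ t ∈ Set.Icc (0:ℝ) 1, Γ t x₁ ∈ V := fun t ht =>
              hKV (hΓmem t ht x₁ (mem_closedBall_self hε.le))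
            refine ContinuousOn.clm_comp ((hgfcont k).comp hΓc hmaps) ?_
            exact (Continuous.smul Complex.continuous_ofReal continuous_const).continuousOn
        exact (hDcont.mono Set.Ioc_subset_Icc_self).aestronglyMeasurable measurableSet_Ioc
      have h_bound : ∀ᵐ t ∂(volume.restrict (Set.Ioc (0:ℝ) 1)),
          ∀ x ∈ ball x₁ ε, ‖D t x‖ ≤ ∑ k, (C0 + R * C1 k) := by
        filter_upwards [ae_restrict_mem measurableSet_Ioc] with t ht
        exact fun x hx => hDbound t (Set.Ioc_subset_Icc_self ht) x hx
      have bound_integrable : Integrable (fun _ : ℝ => ∑ k, (C0 + R * C1 k))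
          (volume.restrict (Set.Ioc (0:ℝ) 1)) :=
        (integrableOn_const measure_Ioc_lt_top.ne :
          IntegrableOn _ (Set.Ioc (0:ℝ) 1) volume)
      have h_diff : ∀ᵐ t ∂(volume.restrict (Set.Ioc (0:ℝ) 1)),
          ∀ x ∈ ball x₁ ε, HasFDerivAt (fun y => Ψ t y) (D t x) x := by
        filter_upwards [ae_restrict_mem measurableSet_Ioc] with t ht
        exact fun x hx => hdiffΨ t (Set.Ioc_subset_Icc_self ht) x hx
      exact hasFDerivAt_integral_of_dominated_of_fderiv_le
        (μ := volume.restrict (Set.Ioc (0:ℝ) 1)) (F := fun x t => Ψ t x)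
        (F' := fun x t => D t x) (x₀ := x₁)
        (bound := fun _ => ∑ k, (C0 + R * C1 k))
        (ball_mem_nhds x₁ hε) hF_meas hF_int hF'_meas h_bound bound_integrable h_diff
    exact key.differentiableAt
  -- the real part of P is h - h z₀
  have hRe : ∀ z ∈ V, (P z).re = h z - h z₀ := by
    intro z hz
    have half : ∀ t ∈ Set.Ioc (0:ℝ) 1,
        (Ψ t z).re = fderiv ℝ h (z₀ + t • (z - z₀)) (z - z₀) := by
      intro t ht
      have hre : (Ψ t z).re = ∑ k, (g (z₀ + t • (z - z₀)) k * (z k - z₀ k)).re := by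
        rw [hΨ_def, Complex.re_sum]
      rw [hre]
      have hterm : ∀ k : Fin m, (g (z₀ + t • (z - z₀)) k * (z k - z₀ k)).re
          = fderiv ℝ h (z₀ + t • (z - z₀)) (Pi.single k ((z - z₀) k)) := by
        intro k
        rw [phf_single_decomp, map_add, _root_.map_smul, _root_.map_smul]
        simp [hg_def, Complex.mul_re, Complex.sub_re, Complex.sub_im, smul_eq_mul,
          Pi.sub_apply]
        ring
      rw [Finset.sum_congr rfl fun k _ => hterm k, ← map_sum]
      congr 1
      exact Finset.univ_sum_single _
    have hder : ∀ t ∈ Set.uIcc (0:ℝ) 1, HasDerivAt (fun s => h (z₀ + s • (z - z₀)))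
        (fderiv ℝ h (z₀ + t • (z - z₀)) (z - z₀)) t := by
      intro t ht
      rw [Set.uIcc_of_le zero_le_one] at ht
      have h1 : HasDerivAt (fun s : ℝ => z₀ + s • (z - z₀)) (z - z₀) t := by
        simpa using ((hasDerivAt_id t).smul_const (z - z₀)).const_add z₀
      exact ((hdiffh _ (hseg z hz t ht)).hasFDerivAt.comp_hasDerivAt t h1)
    have hcont' : ContinuousOn (fun t => fderiv ℝ h (z₀ + t • (z - z₀)) (z - z₀))
        (Set.Icc (0:ℝ) 1) := by
      have hfd : ContinuousOn (fderiv ℝ h) V :=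
        hC2.continuousOn_fderiv_of_isOpen hVopen (by norm_num)
      have hγ : ContinuousOn (fun t : ℝ => z₀ + t • (z - z₀)) (Set.Icc 0 1) := by fun_prop
      exact (hfd.comp hγ fun t ht => hseg z hz t ht).clm_apply continuousOn_const
    have hFTC : ∫ t in (0:ℝ)..1, fderiv ℝ h (z₀ + t • (z - z₀)) (z - z₀) = h z - h z₀ := by
      have hint : IntervalIntegrable
          (fun t => fderiv ℝ h (z₀ + t • (z - z₀)) (z - z₀)) volume 0 1 := by
        apply ContinuousOn.intervalIntegrable
        rwa [Set.uIcc_of_le zero_le_one]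
      have := intervalIntegral.integral_eq_sub_of_hasDerivAt hder hint
      simpa using this
    have h1 : (P z).re = ∫ t in Set.Ioc (0:ℝ) 1, (Ψ t z).re := by
      rw [hP_def]
      exact (Complex.reCLM.integral_comp_comm (hΨint z hz)).symm
    rw [h1, setIntegral_congr_fun measurableSet_Ioc half,
      ← intervalIntegral.integral_of_le zero_le_one, hFTC]
  refine ⟨fun z => Complex.exp ((2⁻¹ : ℂ) * (P z + (h z₀ : ℂ))), ?_, ?_, ?_⟩
  · have hPdOn : DifferentiableOn ℂ P V := fun z hz => (hPdiff z hz).differentiableWithinAt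
    exact ((hPdOn.add_const _).const_mul _).cexp
  · intro z hz
    exact Complex.exp_ne_zero _
  · intro z hz
    rw [Complex.norm_exp]
    have : ((2⁻¹ : ℂ) * (P z + (h z₀ : ℂ))).re = h z / 2 := by
      simp [Complex.mul_re, Complex.add_re, Complex.ofReal_re, hRe z hz]
      ring
    rw [this, sq, ← Real.exp_add, Real.log_exp]
    ring
end
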